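/- arXiv:2508.21684 — 2 statements merged into one kernel-verified Lean document; each statement's English description precedes it below -/
import Mathlib

section
/- Under the ARE as above with Q positive definite, every eigenvalue of A − BR⁻¹BᵀP̄ has strictly negative real part (the closed-loop system is Hurwitz). -/
open Matrix
open scoped ComplexOrder

lemma aux_psd_map {n : ℕ} {M : Matrix (Fin n) (Fin n) ℝ} (hM : M.PosSemidef) :
    (M.map (algebraMap ℝ ℂ)).PosSemidef := by
  obtain ⟨C, rfl⟩ : ∃ C : Matrix (Fin n) (Fin n) ℝ, M = Cᴴ * C := by
    open scoped MatrixOrder in exact CStarAlgebra.nonneg_iff_eq_star_mul_self.mp hM.nonneg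
  rw [Matrix.map_mul (f := algebraMap ℝ ℂ),
    Matrix.conjTranspose_map (algebraMap ℝ ℂ) (by intro r; simp) (A := C)]
  exact posSemidef_conjTranspose_mul_self _

lemma aux_pd_map {n : ℕ} {M : Matrix (Fin n) (Fin n) ℝ} (hM : M.PosDef) :
    (M.map (algebraMap ℝ ℂ)).PosDef := by
  have hpsd := aux_psd_map hM.posSemidef
  obtain ⟨C, hC⟩ : ∃ C : Matrix (Fin n) (Fin n) ℂ, M.map (algebraMap ℝ ℂ) = Cᴴ * C := by
    open scoped MatrixOrder in exact CStarAlgebra.nonneg_iff_eq_star_mul_self.mp hpsd.nonneg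
  have hdet : (M.map (algebraMap ℝ ℂ)).det ≠ 0 := by
    rw [show M.map (algebraMap ℝ ℂ) = (algebraMap ℝ ℂ).mapMatrix M from rfl,
      ← RingHom.map_det]
    simpa using hM.det_pos.ne'
  have hCunit : IsUnit C := by
    rw [hC] at hdet
    refine (Matrix.isUnit_iff_isUnit_det C).mpr ?_
    simp only [det_mul] at hdet
    exact (isUnit_iff_ne_zero).mpr (right_ne_zero_of_mul hdet)
  refine .of_dotProduct_mulVec_pos hpsd.1 fun x hx => ?_
  rw [hC, ← Matrix.mulVec_mulVec, Matrix.dotProduct_mulVec, ← Matrix.star_mulVec]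
  exact Matrix.dotProduct_star_self_pos_iff.mpr
    ((Matrix.mulVec_injective_iff_isUnit.mpr hCunit).ne_iff' (by simp)|>.mpr hx)

lemma aux_eig {n : ℕ} (M : Matrix (Fin n) (Fin n) ℂ) {μ : ℂ} (h : μ ∈ spectrum ℂ M) :
    ∃ v : Fin n → ℂ, v ≠ 0 ∧ M *ᵥ v = μ • v := by
  rw [spectrum.mem_iff] at h
  have hdet : ((algebraMap ℂ (Matrix (Fin n) (Fin n) ℂ)) μ - M).det = 0 := by
    by_contra hd
    exact h ((Matrix.isUnit_iff_isUnit_det _).mpr (isUnit_iff_ne_zero.mpr hd))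
  obtain ⟨v, hv0, hv⟩ := (Matrix.exists_mulVec_eq_zero_iff).mpr hdet
  refine ⟨v, hv0, ?_⟩
  rw [Matrix.sub_mulVec, sub_eq_zero, Algebra.algebraMap_eq_smul_one,
    Matrix.smul_mulVec, Matrix.one_mulVec] at hv
  exact hv.symm

lemma aux_mulVec_star_comm {k n : ℕ} (M : Matrix (Fin k) (Fin n) ℝ) (v : Fin n → ℂ) :
    (M.map (algebraMap ℝ ℂ)) *ᵥ (star v) = star ((M.map (algebraMap ℝ ℂ)) *ᵥ v) := by
  ext i
  simp [Matrix.mulVec, dotProduct, map_sum, Complex.conj_ofReal, mul_comm]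

/-- Under the ARE with `Q ≻ 0`, every (complex) eigenvalue of the closed-loop
matrix `A − BR⁻¹BᵀP̄` has strictly negative real part (Hurwitz). -/
theorem stmt3 {n m : ℕ} (A : Matrix (Fin n) (Fin n) ℝ)
    (B : Matrix (Fin n) (Fin m) ℝ) (Q : Matrix (Fin n) (Fin n) ℝ)
    (R : Matrix (Fin m) (Fin m) ℝ) (P : Matrix (Fin n) (Fin n) ℝ)
    (hQ : Q.PosDef) (hR : R.PosDef) (hP : P.PosDef)
    (hARE : Aᵀ * P + P * A - P * B * R⁻¹ * Bᵀ * P + Q = 0) :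
    ∀ μ ∈ spectrum ℂ ((A - B * (R⁻¹ * Bᵀ * P)).map (algebraMap ℝ ℂ)),
      μ.re < 0 := by
  intro μ hμ
  set Acl : Matrix (Fin n) (Fin n) ℝ := A - B * (R⁻¹ * Bᵀ * P) with hAcl
  set S : Matrix (Fin n) (Fin n) ℝ := P * B * R⁻¹ * Bᵀ * P with hS
  have hRs : Rᵀ = R := hR.1
  have hPs : Pᵀ = P := hP.1
  have hQeq : Q = P * B * R⁻¹ * Bᵀ * P - (Aᵀ * P + P * A) := by
    rw [← sub_eq_zero, ← hARE]; abel
  -- S is positive semidefinite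
  have hSpsd : S.PosSemidef := by
    have h1 : S = (Bᵀ * P)ᵀ * R⁻¹ * (Bᵀ * P) := by
      rw [transpose_mul, transpose_transpose, hPs, hS]; simp [Matrix.mul_assoc]
    rw [h1]
    have : (Bᵀ * P)ᵀ = (Bᵀ * P)ᴴ := rfl
    rw [this]
    exact (hR.inv.posSemidef).conjTranspose_mul_mul_same (Bᵀ * P)
  -- Lyapunov identity
  have hkey : Aclᵀ * P + P * Acl + (Q + S) = 0 := by
    rw [hAcl, hS, hQeq, transpose_sub, transpose_mul, transpose_mul, transpose_mul,
      transpose_nonsing_inv, transpose_transpose, hRs, hPs]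
    simp only [Matrix.sub_mul, Matrix.mul_sub, Matrix.mul_assoc]
    abel
  -- map to ℂ
  let f := algebraMap ℝ ℂ
  have hkeyC : (Acl.map f)ᵀ * (P.map f) + (P.map f) * (Acl.map f)
      + ((Q.map f) + (S.map f)) = 0 := by
    have h := congrArg (fun X : Matrix (Fin n) (Fin n) ℝ => X.map f) hkey
    simpa [Matrix.map_mul (f := f), Matrix.map_add (f := f) f.map_add,
      Matrix.map_zero (f := f) f.map_zero, Matrix.transpose_map] using h
  obtain ⟨v, hv0, hv⟩ := aux_eig _ hμ
  -- quadratic forms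
  set c : ℂ := star v ⬝ᵥ ((P.map f) *ᵥ v) with hc
  set q : ℂ := star v ⬝ᵥ ((Q.map f) *ᵥ v) with hq
  set s : ℂ := star v ⬝ᵥ ((S.map f) *ᵥ v) with hs
  have hstv : (Acl.map f) *ᵥ (star v) = (starRingEnd ℂ μ) • star v := by
    rw [aux_mulVec_star_comm, hv]
    ext i; simp
  have hmain : (starRingEnd ℂ μ) * c + μ * c + (q + s) = 0 := by
    have h := congrArg (fun M : Matrix (Fin n) (Fin n) ℂ => star v ⬝ᵥ (M *ᵥ v)) hkeyC
    simp only [Matrix.add_mulVec, Matrix.zero_mulVec, dotProduct_add, dotProduct_zero,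
      ← Matrix.mulVec_mulVec] at h
    rw [Matrix.dotProduct_mulVec (star v) ((Acl.map f)ᵀ)] at h
    rw [Matrix.vecMul_transpose, hstv, hv] at h
    rw [Matrix.mulVec_smul, dotProduct_smul, smul_dotProduct] at h
    simpa [hc, hq, hs, smul_eq_mul] using h
  have hcre : 0 < c.re := by
    have := (aux_pd_map hP).re_dotProduct_pos hv0
    simpa [RCLike.re_to_complex, hc, f] using this
  have hqre : 0 < q.re := by
    have := (aux_pd_map hQ).re_dotProduct_pos hv0
    simpa [RCLike.re_to_complex, hq, f] using this
  have hsre : 0 ≤ s.re := by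
    have := (aux_psd_map hSpsd).re_dotProduct_nonneg v
    simpa [RCLike.re_to_complex, hs, f] using this
  have hre := congrArg Complex.re hmain
  simp only [Complex.add_re, Complex.mul_re, Complex.neg_re, Complex.conj_re,
    Complex.conj_im, Complex.zero_re] at hre
  nlinarith [hcre, hqre, hsre, hre]
end

section
/- Let x : [0,∞) → ℝ^n solve ẋ = (A − BK̄)x + B u_d + d(t,x), where (A−BK̄)ᵀP̄ + P̄(A−BK̄) ⪯ 0 for a symmetric positive definite P̄, B ∈ ℝ^{n×m} has rank n, |d(t,x)| < λ(t,x) for all (t,x), and u_d := −(λ(t,x)/|P̄x|) B⁺ P̄x with B⁺ := Bᵀ(BBᵀ)⁻¹. Then along any trajectory with P̄x(t) ≠ 0, the function V(x) = ½ xᵀP̄x satisfies d/dt V(x(t)) ≤ (|d| − λ)|P̄x(t)| < 0. -/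
open Matrix

noncomputable def euclNorm {n : ℕ} (v : Fin n → ℝ) : ℝ := Real.sqrt (v ⬝ᵥ v)

lemma euclNorm_nonneg {n : ℕ} (v : Fin n → ℝ) : 0 ≤ euclNorm v := Real.sqrt_nonneg _

lemma dot_self_nonneg' {n : ℕ} (v : Fin n → ℝ) : 0 ≤ v ⬝ᵥ v :=
  Finset.sum_nonneg fun i _ => mul_self_nonneg _

lemma sq_euclNorm {n : ℕ} (v : Fin n → ℝ) : euclNorm v * euclNorm v = v ⬝ᵥ v :=
  Real.mul_self_sqrt (dot_self_nonneg' v)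

lemma euclNorm_pos {n : ℕ} {v : Fin n → ℝ} (hv : v ≠ 0) : 0 < euclNorm v := by
  apply Real.sqrt_pos.mpr
  rcases (dot_self_nonneg' v).lt_or_eq with h | h
  · exact h
  · exact absurd ((dotProduct_self_eq_zero).mp h.symm) hv

lemma dot_le_norms {n : ℕ} (v w : Fin n → ℝ) : v ⬝ᵥ w ≤ euclNorm v * euclNorm w := by
  have h := Finset.sum_mul_sq_le_sq_mul_sq Finset.univ v w
  have h1 : v ⬝ᵥ w ≤ Real.sqrt ((v ⬝ᵥ w) ^ 2) := by
    rw [Real.sqrt_sq_eq_abs]; exact le_abs_self _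
  calc v ⬝ᵥ w ≤ Real.sqrt ((v ⬝ᵥ w) ^ 2) := h1
    _ ≤ Real.sqrt ((∑ i, v i ^ 2) * (∑ i, w i ^ 2)) := Real.sqrt_le_sqrt h
    _ = euclNorm v * euclNorm w := by
        rw [euclNorm, euclNorm, Real.sqrt_mul (Finset.sum_nonneg fun i _ => sq_nonneg _)]
        congr 2 <;> simp [dotProduct, sq]

lemma isUnit_BBt {n m : ℕ} (B : Matrix (Fin n) (Fin m) ℝ) (hrank : B.rank = n) :
    IsUnit (B * Bᵀ) := by
  rw [← Matrix.mulVec_surjective_iff_isUnit]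
  have h : (B * Bᵀ).rank = n := by rw [Matrix.rank_self_mul_transpose, hrank]
  have htop : LinearMap.range (B * Bᵀ).mulVecLin = ⊤ := by
    apply Submodule.eq_top_of_finrank_eq
    rw [← Matrix.rank, h, Module.finrank_fintype_fun_eq_card, Fintype.card_fin]
  intro v
  obtain ⟨w, hw⟩ := (LinearMap.range_eq_top.mp htop) v
  exact ⟨w, hw⟩

/-- Lyapunov redesign for the linear system: along any trajectory of
`ẋ = (A − BK̄)x + B u_d + d(t,x)` with `P̄ x(t) ≠ 0`, the function
`V(x) = ½ xᵀP̄x` satisfies `d/dt V(x(t)) ≤ (|d| − λ)|P̄x(t)| < 0`. -/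
theorem stmt4 {n m : ℕ} (A : Matrix (Fin n) (Fin n) ℝ)
    (B : Matrix (Fin n) (Fin m) ℝ) (K : Matrix (Fin m) (Fin n) ℝ)
    (P : Matrix (Fin n) (Fin n) ℝ) (hP : P.PosDef)
    (hrank : B.rank = n)
    (hLyap : (-((A - B * K)ᵀ * P + P * (A - B * K))).PosSemidef)
    (lam : ℝ → (Fin n → ℝ) → ℝ) (d : ℝ → (Fin n → ℝ) → Fin n → ℝ)
    (hd : ∀ t x, euclNorm (d t x) < lam t x)
    (x : ℝ → Fin n → ℝ) (ud : ℝ → Fin m → ℝ)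
    (hud : ∀ t, ud t = (-(lam t (x t) / euclNorm (P *ᵥ x t))) •
      ((Bᵀ * (B * Bᵀ)⁻¹) *ᵥ (P *ᵥ x t)))
    (hx : ∀ t, HasDerivAt x ((A - B * K) *ᵥ x t + B *ᵥ ud t + d t (x t)) t) :
    ∀ t, 0 ≤ t → P *ᵥ x t ≠ 0 →
      deriv (fun s => (1 / 2) * (x s ⬝ᵥ (P *ᵥ x s))) t ≤
          (euclNorm (d t (x t)) - lam t (x t)) * euclNorm (P *ᵥ x t) ∧
        (euclNorm (d t (x t)) - lam t (x t)) * euclNorm (P *ᵥ x t) < 0 := by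
  intro t ht hPx
  set M := A - B * K with hM
  set v := x t with hv
  set x' := M *ᵥ x t + B *ᵥ ud t + d t (x t) with hx'def
  have hsymm : Pᵀ = P := by
    have h := hP.1
    simpa [Matrix.IsHermitian, Matrix.conjTranspose_eq_transpose_of_trivial] using h
  have hN : 0 < euclNorm (P *ᵥ v) := euclNorm_pos hPx
  set N := euclNorm (P *ᵥ v) with hNdef
  -- coordinatewise derivatives
  have hdc : ∀ i, HasDerivAt (fun s => x s i) (x' i) t :=
    fun i => hasDerivAt_pi.mp (hx t) i
  -- derivative of V
  have hD : HasDerivAt (fun s => (1 / 2 : ℝ) * (x s ⬝ᵥ (P *ᵥ x s)))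
      ((1 / 2) * (x' ⬝ᵥ (P *ᵥ v) + v ⬝ᵥ (P *ᵥ x'))) t := by
    have h1 : HasDerivAt (fun s => ∑ i, ∑ j, x s i * (P i j * x s j))
        (∑ i, ∑ j, (x' i * (P i j * v j) + v i * (P i j * x' j))) t := by
      apply HasDerivAt.fun_sum
      intro i _
      apply HasDerivAt.fun_sum
      intro j _
      exact (hdc i).mul ((hdc j).const_mul (P i j))
    have hfun : (fun s => (1 / 2 : ℝ) * (x s ⬝ᵥ (P *ᵥ x s)))
        = fun s => (1 / 2 : ℝ) * ∑ i, ∑ j, x s i * (P i j * x s j) := by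
      funext s
      simp [dotProduct, mulVec, Finset.mul_sum]
    have hval : (1 / 2 : ℝ) * (x' ⬝ᵥ (P *ᵥ v) + v ⬝ᵥ (P *ᵥ x'))
        = (1 / 2 : ℝ) * ∑ i, ∑ j, (x' i * (P i j * v j) + v i * (P i j * x' j)) := by
      simp [dotProduct, mulVec, Finset.mul_sum, Finset.sum_add_distrib]
    rw [hfun, hval]
    exact h1.const_mul _
  have hderiv : deriv (fun s => (1 / 2 : ℝ) * (x s ⬝ᵥ (P *ᵥ x s))) t
      = (1 / 2) * (x' ⬝ᵥ (P *ᵥ v) + v ⬝ᵥ (P *ᵥ x')) := hD.deriv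
  -- rewrite derivative as (Pv) ⬝ x'
  have hswap : v ⬝ᵥ (P *ᵥ x') = (P *ᵥ v) ⬝ᵥ x' := by
    rw [Matrix.dotProduct_mulVec]
    congr 1
    rw [← hsymm, Matrix.mulVec_transpose, hsymm]
  have hDval : deriv (fun s => (1 / 2 : ℝ) * (x s ⬝ᵥ (P *ᵥ x s))) t
      = (P *ᵥ v) ⬝ᵥ x' := by
    rw [hderiv, dotProduct_comm x', hswap]; ring
  -- split x'
  have hsplit : (P *ᵥ v) ⬝ᵥ x'
      = (P *ᵥ v) ⬝ᵥ (M *ᵥ v) + (P *ᵥ v) ⬝ᵥ (B *ᵥ ud t) + (P *ᵥ v) ⬝ᵥ (d t v) := by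
    rw [hx'def, ← hv, dotProduct_add, dotProduct_add]
  -- term 1
  have hvP : v ᵥ* P = P *ᵥ v := by
    calc v ᵥ* P = Pᵀ *ᵥ v := (Matrix.mulVec_transpose P v).symm
      _ = P *ᵥ v := by rw [hsymm]
  have ht1 : (P *ᵥ v) ⬝ᵥ (M *ᵥ v) ≤ 0 := by
    have h0 := hLyap.dotProduct_mulVec_nonneg v
    have hstar : star v = v := by funext i; simp
    rw [hstar, Matrix.neg_mulVec, dotProduct_neg, Matrix.add_mulVec,
      dotProduct_add, ← Matrix.mulVec_mulVec, ← Matrix.mulVec_mulVec,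
      Matrix.dotProduct_mulVec v Mᵀ, Matrix.vecMul_transpose,
      Matrix.dotProduct_mulVec v P, hvP, dotProduct_comm (M *ᵥ v)] at h0
    linarith
  -- term 2
  have hBBt : IsUnit (B * Bᵀ).det :=
    (Matrix.isUnit_iff_isUnit_det _).mp (isUnit_BBt B hrank)
  have hBud : B *ᵥ ud t = (-(lam t v / N)) • (P *ᵥ v) := by
    rw [hud t, Matrix.mulVec_smul, Matrix.mulVec_mulVec, ← Matrix.mul_assoc,
      Matrix.mul_nonsing_inv _ hBBt, Matrix.one_mulVec]
  have ht2 : (P *ᵥ v) ⬝ᵥ (B *ᵥ ud t) = -(lam t v) * N := by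
    rw [hBud, dotProduct_smul, smul_eq_mul, ← sq_euclNorm, ← hNdef]
    field_simp
  -- term 3
  have ht3 : (P *ᵥ v) ⬝ᵥ (d t v) ≤ euclNorm (d t v) * N := by
    have := dot_le_norms (P *ᵥ v) (d t v)
    rw [← hNdef] at this
    linarith [this]
  refine ⟨?_, ?_⟩
  · rw [hDval, hsplit, ht2]
    nlinarith [ht1, ht3]
  · exact mul_neg_of_neg_of_pos (by linarith [hd t (x t)]) hN
end
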